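/- Suppose r > d > 0. Any pair (h*, k*) with K < h* < k* solving the smooth-fit system (opt-hk) satisfies h* < r(K − δ)/d and k* > (r/d)·K. -/

import Mathlib

noncomputable section

private lemma smooth_fit_W (p m q K' : ℝ) (hpq : p * (p + m - 1) = q)
    {x : ℝ} (hx : 0 < x) :
    HasDerivAt (fun y : ℝ => (y ^ p - p * y ^ (p - 1) * (y - K')) * y ^ m)
      (x ^ (p + m - 2) * ((m - q) * x + q * K')) x := by
  have hx0 : x ≠ 0 := ne_of_gt hx
  have h1 : HasDerivAt (fun y : ℝ => y ^ p) (p * x ^ (p - 1)) x :=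
    Real.hasDerivAt_rpow_const (Or.inl hx0)
  have h2 : HasDerivAt (fun y : ℝ => y ^ (p - 1)) ((p - 1) * x ^ (p - 1 - 1)) x :=
    Real.hasDerivAt_rpow_const (Or.inl hx0)
  have h3 : HasDerivAt (fun y : ℝ => y ^ m) (m * x ^ (m - 1)) x :=
    Real.hasDerivAt_rpow_const (Or.inl hx0)
  have h4 : HasDerivAt (fun y : ℝ => y - K') 1 x := (hasDerivAt_id x).sub_const K'
  have h5 := (h1.sub ((h2.const_mul p).mul h4)).mul h3
  have heq : x ^ (p + m - 2) * ((m - q) * x + q * K') =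
      (p * x ^ (p - 1) - (p * ((p - 1) * x ^ (p - 1 - 1)) * (x - K') + p * x ^ (p - 1) * 1)) * x ^ m
        + (x ^ p - p * x ^ (p - 1) * (x - K')) * (m * x ^ (m - 1)) := by
    have eA : x ^ (p + m - 2) = x ^ p * x ^ m / x / x := by
      rw [show p + m - 2 = (p + m) - 1 - 1 by ring, Real.rpow_sub_one hx0,
        Real.rpow_sub_one hx0, Real.rpow_add hx]
    have eB : x ^ (p - 1 - 1) = x ^ p / x / x := by
      rw [Real.rpow_sub_one hx0, Real.rpow_sub_one hx0]
    rw [eA, eB, Real.rpow_sub_one hx0 p, Real.rpow_sub_one hx0 m, ← hpq]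
    field_simp
    ring
  rw [heq]
  exact h5

set_option maxHeartbeats 1000000 in
/-- Any pair `(h*, k*)` with `K < h* < k*` solving the smooth-fit system (opt-hk) satisfies
`h* < r(K − δ)/d` and `k* > (r/d)K`. -/
theorem smooth_fit_bounds (r d σ K δ : ℝ)
    (hrd : r > d) (hd : 0 < d) (hσ : 0 < σ) (hK : 0 < K) (hδ : 0 < δ)
    (lam κ η ν B : ℝ)
    (hlam : lam = Real.sqrt (2 * r + ((r - d - σ ^ 2 / 2) / σ) ^ 2))
    (hκ : κ = (r - d - σ ^ 2 / 2) / σ ^ 2)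
    (hη : η = lam / σ - κ) (hν : ν = -(lam / σ) - κ) (hB : B = η - ν)
    (ψ φ Sd : ℝ → ℝ) (hatψ hatφ : ℝ → ℝ → ℝ)
    (hψ : ψ = fun x => x ^ η) (hφ : φ = fun x => x ^ ν)
    (hhatψ : hatψ = fun h x => ψ x - (ψ h / φ h) * φ x)
    (hhatφ : hatφ = fun k x => φ x - (φ k / ψ k) * ψ x)
    (hSd : Sd = fun x => x ^ (-(2 * (r - d) / σ ^ 2)))
    (h k : ℝ) (hKh : K < h) (hhk : h < k)
    (hsys1 : hatφ k h / Sd h - (deriv (hatφ k) h / Sd h) * ((h - K) + δ) =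
      B * (k - K) / ψ k)
    (hsys2 : hatψ h k / Sd k - (deriv (hatψ h) k / Sd k) * (k - K) =
      -B * ((h - K) + δ) / φ h) :
    h < r * (K - δ) / d ∧ k > r / d * K := by
  have hr : 0 < r := hd.trans hrd
  have hσne : σ ≠ 0 := ne_of_gt hσ
  have hσ2 : (0:ℝ) < σ ^ 2 := by positivity
  have hσ2ne : σ ^ 2 ≠ 0 := ne_of_gt hσ2
  have hh0 : 0 < h := hK.trans hKh
  have hk0 : 0 < k := hh0.trans hhk
  set m : ℝ := 2 * (r - d) / σ ^ 2 with hm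
  set q : ℝ := 2 * r / σ ^ 2 with hq
  have hlam2 : lam ^ 2 = 2 * r + ((r - d - σ ^ 2 / 2) / σ) ^ 2 := by
    rw [hlam]; exact Real.sq_sqrt (by positivity)
  have hlampos : 0 < lam := by
    rw [hlam]; exact Real.sqrt_pos.mpr (by positivity)
  have h2κ : 2 * κ = m - 1 := by
    rw [hκ, hm]; field_simp
  have key_common : lam ^ 2 / σ ^ 2 - κ ^ 2 = q := by
    rw [hlam2, hκ, hq]; field_simp; ring
  have key1 : η * (η + m - 1) = q := by
    rw [hη, show lam / σ - κ + m - 1 = lam / σ + κ by linarith, ← key_common]; ring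
  have key2 : ν * (ν + m - 1) = q := by
    rw [hν, show -(lam / σ) - κ + m - 1 = -(lam / σ) + κ by linarith, ← key_common]; ring
  have hsum : η + ν = 1 - m := by rw [hη, hν]; linarith
  have hBval : B = 2 * (lam / σ) := by rw [hB, hη, hν]; ring
  have hBpos : 0 < B := by rw [hBval]; positivity
  have hSdinv : ∀ x : ℝ, 0 < x → Sd x = (x ^ m) ⁻¹ := by
    intro x hx
    simp only [hSd]
    exact Real.rpow_neg hx.le m
  have hmq : ∀ x : ℝ, (m - q) * x + q * K = 2 * (r * K - d * x) / σ ^ 2 := by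
    intro x; rw [hm, hq]; ring
  have hmq' : ∀ x : ℝ, (m - q) * x + q * (K - δ) = 2 * (r * (K - δ) - d * x) / σ ^ 2 := by
    intro x; rw [hm, hq]; ring
  have hkη : (0:ℝ) < k ^ η := Real.rpow_pos_of_pos hk0 η
  have hkν : (0:ℝ) < k ^ ν := Real.rpow_pos_of_pos hk0 ν
  have hhη : (0:ℝ) < h ^ η := Real.rpow_pos_of_pos hh0 η
  have hhν : (0:ℝ) < h ^ ν := Real.rpow_pos_of_pos hh0 ν
  constructor
  · -- h < r (K - δ) / d
    by_contra hcon
    push_neg at hcon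
    have hrKd : r * (K - δ) ≤ d * h := by
      have h1 : d * (r * (K - δ) / d) ≤ d * h := mul_le_mul_of_nonneg_left hcon hd.le
      have h2 : d * (r * (K - δ) / d) = r * (K - δ) := by field_simp
      linarith
    set c : ℝ := k ^ ν / k ^ η with hc
    set Q : ℝ → ℝ := fun y =>
      (y ^ ν - ν * y ^ (ν - 1) * (y - (K - δ))) * y ^ m
        - c * ((y ^ η - η * y ^ (η - 1) * (y - (K - δ))) * y ^ m) with hQdef
    have hQder : ∀ x : ℝ, 0 < x →
        HasDerivAt Q ((x ^ (ν + m - 2) - c * x ^ (η + m - 2)) * ((m - q) * x + q * (K - δ))) x := by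
      intro x hx
      have h1 := smooth_fit_W ν m q (K - δ) key2 hx
      have h2 := (smooth_fit_W η m q (K - δ) key1 hx).const_mul c
      have heq : (x ^ (ν + m - 2) - c * x ^ (η + m - 2)) * ((m - q) * x + q * (K - δ)) =
          x ^ (ν + m - 2) * ((m - q) * x + q * (K - δ))
            - c * (x ^ (η + m - 2) * ((m - q) * x + q * (K - δ))) := by ring
      rw [heq]
      exact h1.sub h2
    have hQanti : AntitoneOn Q (Set.Icc h k) := by
      apply antitoneOn_of_deriv_nonpos (convex_Icc h k)
      · intro x hx
        have hx0 : 0 < x := lt_of_lt_of_le hh0 hx.1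
        exact (hQder x hx0).differentiableAt.continuousAt.continuousWithinAt
      · rw [interior_Icc]
        intro x hx
        have hx0 : 0 < x := hh0.trans hx.1
        exact (hQder x hx0).differentiableAt.differentiableWithinAt
      · rw [interior_Icc]
        intro x hx
        have hx0 : 0 < x := hh0.trans hx.1
        rw [(hQder x hx0).deriv]
        have f1 : 0 ≤ x ^ (ν + m - 2) - c * x ^ (η + m - 2) := by
          have e1 : x ^ (ν + m - 2) = x ^ (ν - η) * x ^ (η + m - 2) := by
            rw [← Real.rpow_add hx0]; congr 1; ring
          have e2 : c = k ^ (ν - η) := by rw [hc, Real.rpow_sub hk0]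
          have e3 : k ^ (ν - η) ≤ x ^ (ν - η) := by
            rw [show ν - η = -B by rw [hB]; ring, Real.rpow_neg hk0.le, Real.rpow_neg hx0.le]
            exact inv_anti₀ (Real.rpow_pos_of_pos hx0 B)
              (Real.rpow_le_rpow hx0.le hx.2.le hBpos.le)
          have e4 : (0:ℝ) ≤ x ^ (η + m - 2) := (Real.rpow_pos_of_pos hx0 _).le
          rw [e1, e2, ← sub_mul]
          exact mul_nonneg (sub_nonneg.mpr e3) e4
        have f2 : (m - q) * x + q * (K - δ) ≤ 0 := by
          rw [hmq' x]
          apply div_nonpos_of_nonpos_of_nonneg _ hσ2.le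
          nlinarith [hx.1.le]
        exact mul_nonpos_of_nonneg_of_nonpos f1 f2
    have hatder : ∀ x : ℝ, 0 < x →
        HasDerivAt (hatφ k) (ν * x ^ (ν - 1) - c * (η * x ^ (η - 1))) x := by
      intro x hx
      simp only [hhatφ, hφ, hψ]
      exact (Real.hasDerivAt_rpow_const (Or.inl hx.ne')).sub
        ((Real.hasDerivAt_rpow_const (Or.inl hx.ne')).const_mul c)
    have hQh : Q h = B * (k - K) / ψ k := by
      have ha : hatφ k h = h ^ ν - c * h ^ η := by simp only [hhatφ, hφ, hψ, hc]
      have hd1 : deriv (hatφ k) h = ν * h ^ (ν - 1) - c * (η * h ^ (η - 1)) :=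
        (hatder h hh0).deriv
      rw [← hsys1, ha, hd1, hSdinv h hh0, div_inv_eq_mul, div_inv_eq_mul]
      simp only [hQdef]
      ring
    have hQk : Q k = B * ((k - K) + δ) / ψ k := by
      simp only [hQdef, hψ, hc, hB]
      rw [Real.rpow_sub_one hk0.ne' ν, Real.rpow_sub_one hk0.ne' η,
        show m = 1 - (η + ν) by linarith, Real.rpow_sub hk0, Real.rpow_one,
        Real.rpow_add hk0]
      field_simp
      ring
    have hle : Q k ≤ Q h := hQanti ⟨le_rfl, hhk.le⟩ ⟨hhk.le, le_rfl⟩ hhk.le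
    rw [hQk, hQh] at hle
    have hψk : 0 < ψ k := by rw [hψ]; exact hkη
    rw [div_le_div_iff₀ hψk hψk, mul_le_mul_iff_left₀ hψk] at hle
    nlinarith [mul_pos hBpos hδ]
  · -- k > (r/d) K
    by_contra hcon
    push_neg at hcon
    have hdk : d * k ≤ r * K := by
      have h1 : d * k ≤ d * (r / d * K) := mul_le_mul_of_nonneg_left hcon hd.le
      have h2 : d * (r / d * K) = r * K := by field_simp
      linarith
    set c : ℝ := h ^ η / h ^ ν with hc
    set Q : ℝ → ℝ := fun y =>
      (y ^ η - η * y ^ (η - 1) * (y - K)) * y ^ m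
        - c * ((y ^ ν - ν * y ^ (ν - 1) * (y - K)) * y ^ m) with hQdef
    have hQder : ∀ x : ℝ, 0 < x →
        HasDerivAt Q ((x ^ (η + m - 2) - c * x ^ (ν + m - 2)) * ((m - q) * x + q * K)) x := by
      intro x hx
      have h1 := smooth_fit_W η m q K key1 hx
      have h2 := (smooth_fit_W ν m q K key2 hx).const_mul c
      have heq : (x ^ (η + m - 2) - c * x ^ (ν + m - 2)) * ((m - q) * x + q * K) =
          x ^ (η + m - 2) * ((m - q) * x + q * K)
            - c * (x ^ (ν + m - 2) * ((m - q) * x + q * K)) := by ring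
      rw [heq]
      exact h1.sub h2
    have hQmono : MonotoneOn Q (Set.Icc h k) := by
      apply monotoneOn_of_deriv_nonneg (convex_Icc h k)
      · intro x hx
        have hx0 : 0 < x := lt_of_lt_of_le hh0 hx.1
        exact (hQder x hx0).differentiableAt.continuousAt.continuousWithinAt
      · rw [interior_Icc]
        intro x hx
        have hx0 : 0 < x := hh0.trans hx.1
        exact (hQder x hx0).differentiableAt.differentiableWithinAt
      · rw [interior_Icc]
        intro x hx
        have hx0 : 0 < x := hh0.trans hx.1
        rw [(hQder x hx0).deriv]
        have f1 : 0 ≤ x ^ (η + m - 2) - c * x ^ (ν + m - 2) := by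
          have e1 : x ^ (η + m - 2) = x ^ (η - ν) * x ^ (ν + m - 2) := by
            rw [← Real.rpow_add hx0]; congr 1; ring
          have e2 : c = h ^ (η - ν) := by rw [hc, Real.rpow_sub hh0]
          have e3 : h ^ (η - ν) ≤ x ^ (η - ν) := by
            rw [show η - ν = B by rw [hB]]
            exact Real.rpow_le_rpow hh0.le hx.1.le hBpos.le
          have e4 : (0:ℝ) ≤ x ^ (ν + m - 2) := (Real.rpow_pos_of_pos hx0 _).le
          rw [e1, e2, ← sub_mul]
          exact mul_nonneg (sub_nonneg.mpr e3) e4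
        have f2 : 0 ≤ (m - q) * x + q * K := by
          rw [hmq x]
          apply div_nonneg _ hσ2.le
          nlinarith [hx.2.le]
        exact mul_nonneg f1 f2
    have hatder : ∀ x : ℝ, 0 < x →
        HasDerivAt (hatψ h) (η * x ^ (η - 1) - c * (ν * x ^ (ν - 1))) x := by
      intro x hx
      simp only [hhatψ, hφ, hψ]
      exact (Real.hasDerivAt_rpow_const (Or.inl hx.ne')).sub
        ((Real.hasDerivAt_rpow_const (Or.inl hx.ne')).const_mul c)
    have hQk : Q k = -B * ((h - K) + δ) / φ h := by
      have ha : hatψ h k = k ^ η - c * k ^ ν := by simp only [hhatψ, hφ, hψ, hc]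
      have hd1 : deriv (hatψ h) k = η * k ^ (η - 1) - c * (ν * k ^ (ν - 1)) :=
        (hatder k hk0).deriv
      rw [← hsys2, ha, hd1, hSdinv k hk0, div_inv_eq_mul, div_inv_eq_mul]
      simp only [hQdef]
      ring
    have hQh : Q h = -B * (h - K) / φ h := by
      simp only [hQdef, hφ, hc, hB]
      rw [Real.rpow_sub_one hh0.ne' ν, Real.rpow_sub_one hh0.ne' η,
        show m = 1 - (η + ν) by linarith, Real.rpow_sub hh0, Real.rpow_one,
        Real.rpow_add hh0]
      field_simp
      ring
    have hle : Q h ≤ Q k := hQmono ⟨le_rfl, hhk.le⟩ ⟨hhk.le, le_rfl⟩ hhk.le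
    rw [hQk, hQh] at hle
    have hφh : 0 < φ h := by rw [hφ]; exact hhν
    rw [div_le_div_iff₀ hφh hφh, mul_le_mul_iff_left₀ hφh] at hle
    nlinarith [mul_pos hBpos hδ]

end
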